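/- If {P^{(n)}_{σ^{-n}ω} 1_X}_n is uniformly integrable (equivalently weakly precompact) for ℙ-a.e. ω, then for ℙ-a.e. ω and every f ∈ L¹(X,m) the family {P^{(n)}_{σ^{-n}ω} f}_n is uniformly integrable. -/

import Mathlib

open MeasureTheory Filter Topology

/-- `P_ω^{(n)} = P_{σ^{n-1}ω} ∘ ⋯ ∘ P_ω`, `P_ω^{(0)} = id`. -/
noncomputable def clmCocycle {Ω 𝔛 : Type*} [NormedAddCommGroup 𝔛] [NormedSpace ℝ 𝔛]
    (σ : Ω → Ω) (P : Ω → (𝔛 →L[ℝ] 𝔛)) : ℕ → Ω → (𝔛 →L[ℝ] 𝔛)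
  | 0, _ => ContinuousLinearMap.id ℝ 𝔛
  | n + 1, ω => (clmCocycle σ P n (σ ω)).comp (P ω)

/-- The constant function `1` as an element of `L¹(X,m)`. -/
noncomputable def oneLp {X : Type*} [MeasurableSpace X] (m : Measure X)
    [IsProbabilityMeasure m] : Lp ℝ 1 m :=
  indicatorConstLp 1 MeasurableSet.univ (by simp) (1 : ℝ)

section Aux

variable {X : Type*} [MeasurableSpace X] {m : Measure X}

/-- A Markov operator: positive and integral-preserving. -/
def IsMarkovCLM (m : Measure X) (T : Lp ℝ 1 m →L[ℝ] Lp ℝ 1 m) : Prop :=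
  (∀ g : Lp ℝ 1 m, 0 ≤ᵐ[m] ⇑g → 0 ≤ᵐ[m] ⇑(T g)) ∧
  (∀ g : Lp ℝ 1 m, ∫ x, (T g) x ∂m = ∫ x, g x ∂m)

theorem IsMarkovCLM.id : IsMarkovCLM m (ContinuousLinearMap.id ℝ (Lp ℝ 1 m)) :=
  ⟨fun _ hg => hg, fun _ => rfl⟩

theorem IsMarkovCLM.comp {T S : Lp ℝ 1 m →L[ℝ] Lp ℝ 1 m}
    (hT : IsMarkovCLM m T) (hS : IsMarkovCLM m S) : IsMarkovCLM m (T.comp S) :=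
  ⟨fun g hg => hT.1 (S g) (hS.1 g hg), fun g => (hT.2 (S g)).trans (hS.2 g)⟩

theorem IsMarkovCLM.mono {T : Lp ℝ 1 m →L[ℝ] Lp ℝ 1 m} (hT : IsMarkovCLM m T)
    {g h : Lp ℝ 1 m} (hgh : ⇑g ≤ᵐ[m] ⇑h) : ⇑(T g) ≤ᵐ[m] ⇑(T h) := by
  have h0 : 0 ≤ᵐ[m] ⇑(h - g) := by
    filter_upwards [Lp.coeFn_sub h g, hgh] with x hx hx2
    rw [hx]; simpa using hx2
  have h1 := hT.1 _ h0
  rw [map_sub] at h1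
  filter_upwards [h1, Lp.coeFn_sub (T h) (T g)] with x hx hx2
  rw [hx2] at hx
  simpa using hx

theorem IsMarkovCLM.abs_le {T : Lp ℝ 1 m →L[ℝ] Lp ℝ 1 m} (hT : IsMarkovCLM m T)
    (f : Lp ℝ 1 m) : ∀ᵐ x ∂m, |(T f) x| ≤ (T |f|) x := by
  have h1 : ⇑(T f) ≤ᵐ[m] ⇑(T |f|) := by
    refine hT.mono ?_
    filter_upwards [Lp.coeFn_abs f] with x hx
    rw [hx]; exact le_abs_self _
  have h2 : ⇑(T (-f)) ≤ᵐ[m] ⇑(T |f|) := by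
    refine hT.mono ?_
    filter_upwards [Lp.coeFn_abs f, Lp.coeFn_neg f] with x hx hx2
    rw [hx, hx2]
    simpa using neg_le_abs (f x)
  rw [map_neg] at h2
  filter_upwards [h1, h2, Lp.coeFn_neg (T f)] with x hx1 hx2 hx3
  rw [hx3] at hx2
  exact _root_.abs_le.2 ⟨neg_le.1 (by simpa using hx2), hx1⟩

end Aux

/-- If `{P^{(n)}_{σ^{-n}ω} 1_X}_n` is uniformly integrable for ℙ-a.e. `ω`,
then for ℙ-a.e. `ω` and every `f ∈ L¹(X,m)` the family
`{P^{(n)}_{σ^{-n}ω} f}_n` is uniformly integrable. -/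
theorem uniform_integrability_extends_to_L1
    {Ω : Type*} [MeasurableSpace Ω] (ℙ : Measure Ω) [IsProbabilityMeasure ℙ]
    {X : Type*} [MeasurableSpace X] (m : Measure X) [IsProbabilityMeasure m]
    (σ : Ω ≃ᵐ Ω) (hσ : Ergodic σ ℙ)
    (P : Ω → (Lp ℝ 1 m →L[ℝ] Lp ℝ 1 m))
    (hMarkov : ∀ᵐ ω ∂ℙ,
      (∀ g : Lp ℝ 1 m, 0 ≤ᵐ[m] ⇑g → 0 ≤ᵐ[m] ⇑(P ω g)) ∧
      (∀ g : Lp ℝ 1 m, ∫ x, (P ω g) x ∂m = ∫ x, g x ∂m))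
    (hone : ∀ᵐ ω ∂ℙ, ∀ ε > (0 : ℝ), ∃ δ > (0 : ℝ),
      ∀ A : Set X, MeasurableSet A → m A < ENNReal.ofReal δ → ∀ n : ℕ,
        ∫ x in A, (clmCocycle σ P n (σ.symm^[n] ω) (oneLp m)) x ∂m < ε) :
    ∀ᵐ ω ∂ℙ, ∀ f : Lp ℝ 1 m, ∀ ε > (0 : ℝ), ∃ δ > (0 : ℝ),
      ∀ A : Set X, MeasurableSet A → m A < ENNReal.ofReal δ → ∀ n : ℕ,
        ∫ x in A, |(clmCocycle σ P n (σ.symm^[n] ω) f) x| ∂m < ε := by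
  have hmp : MeasurePreserving σ.symm ℙ ℙ := hσ.toMeasurePreserving.symm σ
  have hiter : ∀ᵐ ω ∂ℙ, ∀ k : ℕ, IsMarkovCLM m (P (σ.symm^[k] ω)) := by
    rw [MeasureTheory.ae_all_iff]
    exact fun k => (hmp.iterate k).quasiMeasurePreserving.ae hMarkov
  filter_upwards [hiter, hone] with ω hM hone'
  intro f ε hε
  -- the cocycle operators at ω are Markov
  set Q : ℕ → (Lp ℝ 1 m →L[ℝ] Lp ℝ 1 m) := fun n => clmCocycle σ P n (σ.symm^[n] ω) with hQ
  have hQsucc : ∀ n, Q (n + 1) = (Q n).comp (P (σ.symm^[n + 1] ω)) := by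
    intro n
    have h1 : σ.symm^[n + 1] ω = σ.symm (σ.symm^[n] ω) := Function.iterate_succ_apply' _ _ _
    show clmCocycle σ P (n + 1) (σ.symm^[n + 1] ω) = _
    rw [clmCocycle, h1, σ.apply_symm_apply]
  have hQM : ∀ n, IsMarkovCLM m (Q n) := by
    intro n
    induction n with
    | zero => exact IsMarkovCLM.id
    | succ k ih => rw [hQsucc k]; exact ih.comp (hM (k + 1))
  -- choose the truncation level c
  have hfabs : Integrable (fun x => |f x|) m := (L1.integrable_coeFn f).abs
  have key : Filter.Tendsto (fun n : ℕ => ∫ x, (|f x| - min (|f x|) (n : ℝ)) ∂m)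
      Filter.atTop (𝓝 0) := by
    have h0 : (0 : ℝ) = ∫ _ : X, (0 : ℝ) ∂m := by simp
    rw [h0]
    refine tendsto_integral_of_dominated_convergence (fun x => |f x|) ?_ hfabs ?_ ?_
    · intro n
      have ha := (Lp.aestronglyMeasurable f).norm
      simp only [Real.norm_eq_abs] at ha
      exact ha.sub (ha.inf aestronglyMeasurable_const)
    · intro n
      filter_upwards with x
      have h1 : (0 : ℝ) ≤ min (|f x|) (n : ℝ) := le_min (abs_nonneg _) (Nat.cast_nonneg n)
      have h2 : min (|f x|) (n : ℝ) ≤ |f x| := min_le_left _ _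
      rw [Real.norm_eq_abs, abs_of_nonneg (by linarith)]
      linarith
    · filter_upwards with x
      have : ∀ᶠ n : ℕ in Filter.atTop, (|f x| - min (|f x|) (n : ℝ)) = 0 := by
        filter_upwards [Filter.eventually_ge_atTop ⌈|f x|⌉₊] with n hn
        have : |f x| ≤ (n : ℝ) := le_trans (Nat.le_ceil _) (by exact_mod_cast hn)
        rw [min_eq_left this]; ring
      exact Filter.Tendsto.congr' (this.mono fun n hn => hn.symm) tendsto_const_nhds
  have hev : ∀ᶠ n : ℕ in Filter.atTop,
      ∫ x, (|f x| - min (|f x|) (n : ℝ)) ∂m < ε / 2 :=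
    key.eventually (gt_mem_nhds (by linarith))
  obtain ⟨N, hN1, hN2⟩ := ((Filter.eventually_ge_atTop 1).and hev).exists
  set c : ℝ := (N : ℝ) with hc
  have hc1N : (1 : ℝ) ≤ c := by rw [hc]; exact_mod_cast hN1
  have hcpos : (0 : ℝ) < c := by linarith
  -- decompose |f| = g₁ + g₂ in L¹
  set F : Lp ℝ 1 m := |f| with hF
  set c1 : Lp ℝ 1 m := c • oneLp m with hc1
  set g1 : Lp ℝ 1 m := F ⊓ c1 with hg1
  set g2 : Lp ℝ 1 m := F - g1 with hg2
  have hone_coe : ⇑(oneLp m) =ᵐ[m] fun _ => (1 : ℝ) := by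
    filter_upwards [indicatorConstLp_coeFn (p := 1) (μ := m)
      (hs := MeasurableSet.univ) (hμs := by simp) (c := (1 : ℝ))] with x hx
    simp only [Set.indicator_univ] at hx; exact hx
  have hc1_coe : ⇑c1 =ᵐ[m] fun _ => c := by
    filter_upwards [Lp.coeFn_smul c (oneLp m), hone_coe] with x hx hx1
    rw [hx]; simp [hx1]
  have hg1_coe : ⇑g1 =ᵐ[m] fun x => min (|f x|) c := by
    filter_upwards [Lp.coeFn_inf F c1, Lp.coeFn_abs f, hc1_coe] with x hx hxF hxc
    rw [hx]
    show (⇑F x) ⊓ (⇑c1 x) = _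
    rw [hxF, hxc]
  have hg2_coe : ⇑g2 =ᵐ[m] fun x => |f x| - min (|f x|) c := by
    filter_upwards [Lp.coeFn_sub F g1, Lp.coeFn_abs f, hg1_coe] with x hx hxF hx1
    rw [hx]; simp [hxF, hx1]; exact hxF
  have hg2_nonneg : 0 ≤ᵐ[m] ⇑g2 := by
    filter_upwards [hg2_coe] with x hx
    rw [hx]; simp [min_le_left]
  have hg2_int : ∫ x, g2 x ∂m < ε / 2 := by
    rw [integral_congr_ae hg2_coe]; exact hN2
  -- choose δ from the hypothesis on 1
  obtain ⟨δ, hδpos, hδ⟩ := hone' (ε / (2 * c)) (by positivity)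
  refine ⟨δ, hδpos, fun A hA hmA n => ?_⟩
  have hT := hQM n
  set T := Q n with hTdef
  -- integrability facts
  have hint : ∀ g : Lp ℝ 1 m, Integrable (⇑g) (m.restrict A) :=
    fun g => (L1.integrable_coeFn g).restrict
  -- step 1 : ∫_A |T f| ≤ ∫_A T F
  have step1 : ∫ x in A, |(T f) x| ∂m ≤ ∫ x in A, (T F) x ∂m := by
    refine integral_mono_ae ((hint (T f)).abs) (hint (T F)) ?_
    exact ae_restrict_of_ae (hT.abs_le f)
  -- step 2 : T F = T g1 + T g2 a.e.
  have hsum : F = g1 + g2 := by rw [hg2]; abel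
  have step2 : ∫ x in A, (T F) x ∂m = (∫ x in A, (T g1) x ∂m) + ∫ x in A, (T g2) x ∂m := by
    have hTF : ⇑(T F) =ᵐ[m] fun x => (T g1) x + (T g2) x := by
      have : T F = T g1 + T g2 := by rw [hsum, map_add]
      rw [this]
      filter_upwards [Lp.coeFn_add (T g1) (T g2)] with x hx
      rw [hx]; rfl
    rw [setIntegral_congr_ae hA (hTF.mono fun x hx _ => hx)]
    exact integral_add (hint (T g1)) (hint (T g2))
  -- step 3 : ∫_A T g1 ≤ c * ∫_A T 1 < ε/2
  have step3 : ∫ x in A, (T g1) x ∂m < ε / 2 := by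
    have hmono : ⇑(T g1) ≤ᵐ[m] ⇑(T c1) := by
      refine hT.mono ?_
      filter_upwards [hg1_coe, hc1_coe] with x hx hxc
      rw [hx, hxc]; exact min_le_right _ _
    have hTc1 : ⇑(T c1) =ᵐ[m] fun x => c * (T (oneLp m)) x := by
      have : T c1 = c • T (oneLp m) := by rw [hc1]; exact T.map_smul c (oneLp m)
      rw [this]
      filter_upwards [Lp.coeFn_smul c (T (oneLp m))] with x hx
      rw [hx]; rfl
    have h1 : ∫ x in A, (T g1) x ∂m ≤ ∫ x in A, c * (T (oneLp m)) x ∂m := by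
      refine integral_mono_ae (hint (T g1)) ((hint (T (oneLp m))).const_mul c) ?_
      exact ae_restrict_of_ae (hmono.trans hTc1.le)
    have h2 : ∫ x in A, c * (T (oneLp m)) x ∂m = c * ∫ x in A, (T (oneLp m)) x ∂m :=
      integral_const_mul c _
    have h3 : ∫ x in A, (T (oneLp m)) x ∂m < ε / (2 * c) := hδ A hA hmA n
    calc ∫ x in A, (T g1) x ∂m ≤ c * ∫ x in A, (T (oneLp m)) x ∂m := by rw [← h2]; exact h1
      _ < c * (ε / (2 * c)) := by exact (mul_lt_mul_iff_right₀ hcpos).2 h3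
      _ = ε / 2 := by field_simp
  -- step 4 : ∫_A T g2 ≤ ∫ T g2 = ∫ g2 < ε/2
  have step4 : ∫ x in A, (T g2) x ∂m < ε / 2 := by
    have h1 : ∫ x in A, (T g2) x ∂m ≤ ∫ x, (T g2) x ∂m :=
      setIntegral_le_integral (L1.integrable_coeFn (T g2)) (hT.1 g2 hg2_nonneg)
    rw [hT.2 g2] at h1
    exact lt_of_le_of_lt h1 hg2_int
  calc ∫ x in A, |(T f) x| ∂m ≤ ∫ x in A, (T F) x ∂m := step1
    _ = (∫ x in A, (T g1) x ∂m) + ∫ x in A, (T g2) x ∂m := step2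
    _ < ε / 2 + ε / 2 := add_lt_add step3 step4
    _ = ε := by ring
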